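/- arXiv:2411.06645 — 5 statements merged into one kernel-verified Lean document; each statement's English description precedes it below -/
import Mathlib

section
/- Let a > 0, γ > 0 and β, c ∈ ℝ, and set Q(v) := −a·v² + β·v + c. Then the supremum, over all measurable probability densities π : ℝ → [0, ∞) with ∫_ℝ π = 1 for which v ↦ Q(v)π(v) and v ↦ π(v)log π(v) are integrable, of ∫_ℝ (Q(v) − γ·log π(v))·π(v) dv equals β²/(4a) + c + (γ/2)·log(π_math·γ/a) (π_math the constant pi), and this supremum is attained by the Gaussian density with mean β/(2a) and variance γ/(2a). -/
open MeasureTheory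

lemma integrable_sq_mul_exp_neg_mul_sq {b : ℝ} (hb : 0 < b) :
    Integrable (fun x : ℝ => x ^ 2 * Real.exp (-b * x ^ 2)) := by
  have hb2 : 0 < b / 2 := by linarith
  refine Integrable.mono' ((integrable_exp_neg_mul_sq hb2).const_mul (2 / b)) ?_ ?_
  · exact ((measurable_id.pow_const 2).mul
      (((measurable_id.pow_const 2).const_mul (-b)).exp)).aestronglyMeasurable
  · filter_upwards with x
    have h1 : (b / 2) * x ^ 2 ≤ Real.exp ((b / 2) * x ^ 2) :=
      le_trans (by linarith [Real.add_one_le_exp ((b / 2) * x ^ 2)]) le_rfl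
    have h2 : x ^ 2 ≤ (2 / b) * Real.exp ((b / 2) * x ^ 2) := by
      rw [div_mul_eq_mul_div, le_div_iff₀ hb]
      nlinarith
    have h3 : x ^ 2 * Real.exp (-b * x ^ 2)
        ≤ (2 / b) * Real.exp ((b / 2) * x ^ 2) * Real.exp (-b * x ^ 2) :=
      mul_le_mul_of_nonneg_right h2 (Real.exp_pos _).le
    calc ‖x ^ 2 * Real.exp (-b * x ^ 2)‖ = x ^ 2 * Real.exp (-b * x ^ 2) := by
          rw [Real.norm_eq_abs, abs_of_nonneg (by positivity)]
      _ ≤ (2 / b) * Real.exp ((b / 2) * x ^ 2) * Real.exp (-b * x ^ 2) := h3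
      _ = 2 / b * Real.exp (-(b / 2) * x ^ 2) := by
          rw [mul_assoc, ← Real.exp_add]; ring_nf

lemma integrable_quadratic_mul_gauss {b : ℝ} (hb : 0 < b) (μ C c0 c1 c2 : ℝ) :
    Integrable (fun v : ℝ =>
      (c0 + c1 * v + c2 * v ^ 2) * (C * Real.exp (-b * (v - μ) ^ 2))) := by
  have h := ((((integrable_exp_neg_mul_sq hb).const_mul (C * (c0 + c1 * μ + c2 * μ ^ 2))).add
      (((integrable_mul_exp_neg_mul_sq hb).const_mul (C * (c1 + 2 * c2 * μ))))).add
      ((integrable_sq_mul_exp_neg_mul_sq hb).const_mul (C * c2))).comp_sub_right μ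
  refine h.congr ?_
  filter_upwards with v
  simp only [Pi.add_apply]
  ring_nf

/-- The supremum over probability densities of the entropy-regularized objective
`∫ (Q v - γ log π v) π v dv` for a concave quadratic `Q(v) = -a v² + β v + c`
equals `β²/(4a) + c + (γ/2) log(π γ / a)`, and is attained by the Gaussian
density with mean `β/(2a)` and variance `γ/(2a)`. -/
theorem stmt_4 (a γ β c : ℝ) (ha : 0 < a) (hγ : 0 < γ)
    (Q : ℝ → ℝ) (hQ : Q = fun v => -a * v ^ 2 + β * v + c)
    (g : ℝ → ℝ)
    (hg : g = fun v => (Real.sqrt (2 * Real.pi * (γ / (2 * a))))⁻¹ *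
        Real.exp (-(v - β / (2 * a)) ^ 2 / (2 * (γ / (2 * a))))) :
    IsGreatest
      {x : ℝ | ∃ π : ℝ → ℝ, Measurable π ∧ (∀ v, 0 ≤ π v) ∧ (∫ v : ℝ, π v) = 1 ∧
          Integrable (fun v : ℝ => Q v * π v) ∧
          Integrable (fun v : ℝ => π v * Real.log (π v)) ∧
          x = ∫ v : ℝ, (Q v - γ * Real.log (π v)) * π v}
      (β ^ 2 / (4 * a) + c + (γ / 2) * Real.log (Real.pi * γ / a)) ∧
    (Measurable g ∧ (∀ v, 0 ≤ g v) ∧ (∫ v : ℝ, g v) = 1 ∧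
      Integrable (fun v : ℝ => Q v * g v) ∧
      Integrable (fun v : ℝ => g v * Real.log (g v)) ∧
      (∫ v : ℝ, (Q v - γ * Real.log (g v)) * g v) =
        β ^ 2 / (4 * a) + c + (γ / 2) * Real.log (Real.pi * γ / a)) := by
  have ha' : a ≠ 0 := ha.ne'
  have hγ' : γ ≠ 0 := hγ.ne'
  set V : ℝ := β ^ 2 / (4 * a) + c + (γ / 2) * Real.log (Real.pi * γ / a) with hV
  set μ : ℝ := β / (2 * a) with hμ
  have hσpos : (0:ℝ) < γ / (2 * a) := by positivity
  set σ2 : NNReal := ⟨γ / (2 * a), hσpos.le⟩ with hσ2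
  have hσ2ne : σ2 ≠ 0 := by
    simp only [hσ2, ne_eq, ← NNReal.coe_eq_zero]
    exact fun h => hσpos.ne' (congrArg NNReal.toReal h)
  have hgP : g = ProbabilityTheory.gaussianPDFReal μ σ2 := by
    funext v; simp [hg, ProbabilityTheory.gaussianPDFReal, hσ2]; rfl
  -- positivity of g
  have hgpos : ∀ v, 0 < g v := by
    intro v
    rw [hgP]
    exact ProbabilityTheory.gaussianPDFReal_pos μ σ2 v hσ2ne
  -- basic gaussian facts
  have hg_meas : Measurable g := hgP ▸ ProbabilityTheory.measurable_gaussianPDFReal μ σ2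
  have hg_int : Integrable g := hgP ▸ ProbabilityTheory.integrable_gaussianPDFReal μ σ2
  have hg_one : (∫ v : ℝ, g v) = 1 :=
    hgP ▸ ProbabilityTheory.integral_gaussianPDFReal_eq_one μ hσ2ne
  -- the key identity
  have hlog2 : Real.log (2 * Real.pi * (γ / (2 * a))) = Real.log (Real.pi * γ / a) := by
    congr 1; field_simp
  have hloggauss : ∀ v : ℝ, Real.log (g v) =
      -(Real.log (Real.pi * γ / a)) / 2 - (v - μ) ^ 2 / (2 * (γ / (2 * a))) := by
    intro v
    rw [hg]
    have hs : (0:ℝ) < Real.sqrt (2 * Real.pi * (γ / (2 * a))) := by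
      apply Real.sqrt_pos.2; positivity
    rw [Real.log_mul (inv_ne_zero hs.ne') (Real.exp_ne_zero _), Real.log_inv, Real.log_exp,
      Real.log_sqrt (by positivity), hlog2]
    ring
  have keyQ : ∀ v : ℝ, Q v - γ * Real.log (g v) = V := by
    intro v
    rw [hloggauss v, hQ, hV, hμ]
    have h2a : (2 : ℝ) * a ≠ 0 := by positivity
    field_simp
    ring
  -- value at g
  have hval : (∫ v : ℝ, (Q v - γ * Real.log (g v)) * g v) = V := by
    have : (fun v : ℝ => (Q v - γ * Real.log (g v)) * g v) = fun v => V * g v := by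
      funext v; rw [keyQ v]
    rw [this, integral_const_mul, hg_one, mul_one]
  -- Integrable Q * g
  have hQg_int : Integrable (fun v : ℝ => Q v * g v) := by
    have h := integrable_quadratic_mul_gauss (b := a / γ) (by positivity) μ
      ((Real.sqrt (2 * Real.pi * (γ / (2 * a))))⁻¹) c β (-a)
    refine h.congr ?_
    filter_upwards with v
    rw [hQ, hg]
    simp only
    rw [show -(a/γ) * (v - μ)^2 = -(v - μ)^2 / (2 * (γ / (2*a))) by field_simp]
    ring
  -- Integrable g * log g
  have hglogg_int : Integrable (fun v : ℝ => g v * Real.log (g v)) := by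
    have heq : (fun v : ℝ => g v * Real.log (g v))
        = fun v => (1 / γ) * (Q v * g v) - (V / γ) * g v := by
      funext v
      have := keyQ v
      have hlg : Real.log (g v) = (Q v - V) / γ := by
        field_simp
        linarith [keyQ v]
      rw [hlg]; field_simp
    rw [heq]
    exact ((hQg_int.const_mul _).sub (hg_int.const_mul _))
  refine ⟨⟨⟨g, hg_meas, fun v => (hgpos v).le, hg_one, hQg_int, hglogg_int, hval.symm⟩, ?_⟩,
    hg_meas, fun v => (hgpos v).le, hg_one, hQg_int, hglogg_int, hval⟩
  -- upper bound
  rintro x ⟨π, hπm, hπ0, hπ1, hQπ, hπlog, rfl⟩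
  have hπ_int : Integrable π := by
    by_contra h
    rw [integral_undef h] at hπ1
    exact one_ne_zero hπ1.symm
  -- integrand integrability
  have hf_int : Integrable (fun v : ℝ => (Q v - γ * Real.log (π v)) * π v) := by
    have heq : (fun v : ℝ => (Q v - γ * Real.log (π v)) * π v)
        = fun v => Q v * π v - γ * (π v * Real.log (π v)) := by
      funext v; ring
    rw [heq]
    exact hQπ.sub (hπlog.const_mul γ)
  have hh_int : Integrable (fun v : ℝ => γ * (g v - π v) + V * π v) :=
    ((hg_int.sub hπ_int).const_mul γ).add (hπ_int.const_mul V)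
  have hle : ∀ v : ℝ, (Q v - γ * Real.log (π v)) * π v ≤ γ * (g v - π v) + V * π v := by
    intro v
    have hQv : Q v = γ * Real.log (g v) + V := by linarith [keyQ v]
    rw [hQv]
    rcases eq_or_lt_of_le (hπ0 v) with h0 | hpos
    · rw [← h0]
      simp only [mul_zero, sub_zero, zero_add]
      have := (hgpos v).le
      nlinarith [hgpos v, hγ.le]
    · have hlog_le : Real.log (g v) - Real.log (π v) ≤ g v / π v - 1 := by
        rw [← Real.log_div (hgpos v).ne' hpos.ne']
        exact Real.log_le_sub_one_of_pos (div_pos (hgpos v) hpos)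
      have h1 : (Real.log (g v) - Real.log (π v)) * π v ≤ g v - π v := by
        have := mul_le_mul_of_nonneg_right hlog_le hpos.le
        calc (Real.log (g v) - Real.log (π v)) * π v
            ≤ (g v / π v - 1) * π v := this
          _ = g v - π v := by field_simp
      nlinarith [hγ.le]
  calc (∫ v : ℝ, (Q v - γ * Real.log (π v)) * π v)
      ≤ ∫ v : ℝ, (γ * (g v - π v) + V * π v) := integral_mono hf_int hh_int hle
    _ = γ * ((∫ v : ℝ, g v) - ∫ v : ℝ, π v) + V * ∫ v : ℝ, π v := by
        have h1 : Integrable (fun v : ℝ => γ * (g v - π v)) :=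
          (hg_int.sub hπ_int).const_mul γ
        have h2 : Integrable (fun v : ℝ => V * π v) := hπ_int.const_mul V
        rw [integral_add h1 h2, integral_const_mul, integral_const_mul,
          integral_sub hg_int hπ_int]
    _ = V := by rw [hg_one, hπ1]; ring
end

section
/- Let T > 0 and let b, k, φ, ρ, α, κ be real parameters with k + φ > 0, α − b/2 > 0 and κ > 0. Set ζ := (k+φ)/(α − b/2), w₂(t) := −((T−t)/(k+φ) + 1/(α − b/2))^{−1} − b/2, and l₁(t) := 2φρ·((T−t) + ζ)^{−1}·(1 − e^{−κ(T−t)})/κ for t ∈ [0, T]. Then l₁ is differentiable on [0, T], satisfies l₁′(t) − κ·l₁(t) + ((l₁(t) − 2φρ)/(k+φ))·(w₂(t) + b/2) = 0 for all t ∈ [0, T], and l₁(T) = 0. -/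
/-- The coefficient `l₁` solves the linear ODE
`l₁' - κ l₁ + ((l₁ - 2φρ)/(k+φ))(w₂ + b/2) = 0` on `[0, T]` with `l₁(T) = 0`. -/
theorem stmt_6 (T b k φ ρ α κ : ℝ) (hT : 0 < T) (hkφ : 0 < k + φ)
    (hα : 0 < α - b / 2) (hκ : 0 < κ)
    (ζ : ℝ) (hζ : ζ = (k + φ) / (α - b / 2))
    (w₂ l₁ : ℝ → ℝ)
    (hw₂ : w₂ = fun t => -((T - t) / (k + φ) + 1 / (α - b / 2))⁻¹ - b / 2)
    (hl₁ : l₁ = fun t => 2 * φ * ρ * ((T - t) + ζ)⁻¹ *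
        ((1 - Real.exp (-κ * (T - t))) / κ)) :
    (∀ t ∈ Set.Icc (0 : ℝ) T, DifferentiableAt ℝ l₁ t) ∧
    (∀ t ∈ Set.Icc (0 : ℝ) T,
        deriv l₁ t - κ * l₁ t + ((l₁ t - 2 * φ * ρ) / (k + φ)) * (w₂ t + b / 2) = 0) ∧
    l₁ T = 0 := by
  have hζpos : 0 < ζ := by rw [hζ]; positivity
  have key : ∀ t ∈ Set.Icc (0:ℝ) T,
      HasDerivAt l₁ (2*φ*ρ * (((T-t)+ζ)⁻¹)^2 * ((1 - Real.exp (-κ*(T-t)))/κ)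
        + 2*φ*ρ * ((T-t)+ζ)⁻¹ * (-Real.exp (-κ*(T-t)))) t := by
    intro t ht
    have h0 : (T - t) + ζ ≠ 0 := by nlinarith [ht.2]
    have h1 : HasDerivAt (fun t => (T - t) + ζ) (-1) t := by
      simpa using (((hasDerivAt_id t).const_sub T).add_const ζ)
    have h2 : HasDerivAt (fun t => ((T - t) + ζ)⁻¹) ((((T-t)+ζ)⁻¹)^2) t := by
      have := h1.inv h0
      exact this.congr_deriv (by rw [neg_neg, one_div, inv_pow])
    have h3 : HasDerivAt (fun t => -κ * (T - t)) κ t := by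
      have := ((hasDerivAt_id t).const_sub T).const_mul (-κ)
      simpa using this
    have h4 : HasDerivAt (fun t => Real.exp (-κ*(T-t))) (Real.exp (-κ*(T-t)) * κ) t := h3.exp
    have h5 : HasDerivAt (fun t => (1 - Real.exp (-κ*(T-t)))/κ) (-Real.exp (-κ*(T-t))) t := by
      have := (h4.const_sub 1).div_const κ
      exact this.congr_deriv (by rw [neg_div, mul_div_cancel_right₀ _ hκ.ne'])
    have h6 := (h2.const_mul (2*φ*ρ)).mul h5
    rw [hl₁]
    exact h6
  refine ⟨fun t ht => (key t ht).differentiableAt, fun t ht => ?_, by rw [hl₁]; simp⟩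
  have h0 : (T - t) + ζ ≠ 0 := by nlinarith [ht.2]
  have hsum : (T - t) / (k + φ) + 1 / (α - b / 2) ≠ 0 := by
    have h1 : 0 ≤ T - t := by linarith [ht.2]
    positivity
  have hw : w₂ t + b / 2 = -((k + φ) / ((T - t) + ζ)) := by
    simp only [hw₂]
    have : (T - t) / (k + φ) + 1 / (α - b / 2) = ((T - t) + ζ) / (k + φ) := by
      rw [hζ]; field_simp
    rw [this]
    simp [one_div, inv_div]
  rw [(key t ht).deriv, hl₁, hw]
  field_simp
  ring
end

section
/- Let T > 0 and let b, k, φ, ρ, α, κ, λ, m be real parameters with k + φ > 0, α − b/2 > 0 and κ > 0. Set ζ := (k+φ)/(α − b/2), w₂(t) := −((T−t)/(k+φ) + 1/(α − b/2))^{−1} − b/2, l₁(t) := 2φρ·((T−t) + ζ)^{−1}·(1 − e^{−κ(T−t)})/κ, and l₀(t) := 2φρλm·((T−t) + ζ)^{−1}·(e^{−κ(T−t)} − 1 + κ(T−t))/κ² for t ∈ [0, T]. Then l₀ is differentiable on [0, T], satisfies l₀′(t) + ((w₂(t) + b/2)/(k+φ))·l₀(t) + λ·m·l₁(t) = 0 for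 all t ∈ [0, T], and l₀(T) = 0. -/
set_option maxHeartbeats 800000 in
/-- The coefficient `l₀` solves the linear ODE
`l₀' + ((w₂ + b/2)/(k+φ)) l₀ + λ m l₁ = 0` on `[0, T]` with `l₀(T) = 0`. -/
theorem stmt_7 (T b k φ ρ α κ lam m : ℝ) (hT : 0 < T) (hkφ : 0 < k + φ)
    (hα : 0 < α - b / 2) (hκ : 0 < κ)
    (ζ : ℝ) (hζ : ζ = (k + φ) / (α - b / 2))
    (w₂ l₁ l₀ : ℝ → ℝ)
    (hw₂ : w₂ = fun t => -((T - t) / (k + φ) + 1 / (α - b / 2))⁻¹ - b / 2)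
    (hl₁ : l₁ = fun t => 2 * φ * ρ * ((T - t) + ζ)⁻¹ *
        ((1 - Real.exp (-κ * (T - t))) / κ))
    (hl₀ : l₀ = fun t => 2 * φ * ρ * lam * m * ((T - t) + ζ)⁻¹ *
        ((Real.exp (-κ * (T - t)) - 1 + κ * (T - t)) / κ ^ 2)) :
    (∀ t ∈ Set.Icc (0 : ℝ) T, DifferentiableAt ℝ l₀ t) ∧
    (∀ t ∈ Set.Icc (0 : ℝ) T,
        deriv l₀ t + ((w₂ t + b / 2) / (k + φ)) * l₀ t + lam * m * l₁ t = 0) ∧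
    l₀ T = 0 := by
  have hkφ' : k + φ ≠ 0 := ne_of_gt hkφ
  have hα' : α - b / 2 ≠ 0 := ne_of_gt hα
  have hκ' : κ ≠ 0 := ne_of_gt hκ
  have hζpos : 0 < ζ := hζ ▸ div_pos hkφ hα
  have hu : ∀ t ∈ Set.Icc (0 : ℝ) T, 0 < (T - t) + ζ := by
    intro t ht
    have := ht.2
    nlinarith
  have hd : ∀ t ∈ Set.Icc (0 : ℝ) T,
      HasDerivAt l₀
        (2 * φ * ρ * lam * m * (((T - t) + ζ)⁻¹ ^ 2 * (Real.exp (-κ * (T - t)) - 1 + κ * (T - t))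
          + ((T - t) + ζ)⁻¹ * (κ * Real.exp (-κ * (T - t)) - κ)) / κ ^ 2) t := by
    intro t ht
    have hne : (T - t) + ζ ≠ 0 := ne_of_gt (hu t ht)
    have hlin : HasDerivAt (fun s => (T - s) + ζ) (-1) t := by
      simpa using ((hasDerivAt_id t).const_sub T).add_const ζ
    have hinv : HasDerivAt (fun s => ((T - s) + ζ)⁻¹) (((T - t) + ζ)⁻¹ ^ 2) t := by
      have := hlin.inv hne
      refine this.congr_deriv ?_
      field_simp
    have hexp : HasDerivAt (fun s => Real.exp (-κ * (T - s))) (κ * Real.exp (-κ * (T - t))) t := by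
      have h1 : HasDerivAt (fun s => -κ * (T - s)) κ t := by
        simpa using ((hasDerivAt_id t).const_sub T).const_mul (-κ)
      simpa [mul_comm] using h1.exp
    have hg : HasDerivAt (fun s => Real.exp (-κ * (T - s)) - 1 + κ * (T - s))
        (κ * Real.exp (-κ * (T - t)) - κ) t := by
      have h2 : HasDerivAt (fun s => κ * (T - s)) (-κ) t := by
        simpa using ((hasDerivAt_id t).const_sub T).const_mul κ
      have := (hexp.sub_const 1).add h2
      refine this.congr_deriv ?_
      all_goals ring
    have hf := (hinv.const_mul (2 * φ * ρ * lam * m)).mul (hg.div_const (κ ^ 2))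
    rw [hl₀]
    refine hf.congr_deriv ?_
    field_simp
    all_goals ring
  refine ⟨fun t ht => (hd t ht).differentiableAt, fun t ht => ?_, ?_⟩
  · have hne : (T - t) + ζ ≠ 0 := ne_of_gt (hu t ht)
    have h1 : (T - t) / (k + φ) + 1 / (α - b / 2) = ((T - t) + ζ) / (k + φ) := by
      rw [hζ]; field_simp
    have hw : (w₂ t + b / 2) / (k + φ) = -(T - t + ζ)⁻¹ := by
      rw [hw₂]
      simp only
      rw [h1]
      field_simp
      all_goals ring
    rw [(hd t ht).deriv, hw, hl₀, hl₁]
    simp only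
    field_simp
    ring
  · rw [hl₀]
    simp
end

section
/- Let T > 0 and let b, k, φ, ρ, α, κ, λ be real parameters with k + φ > 0, α − b/2 > 0, κ > 0. Let ν be a probability measure on ℝ with finite first moment m := ∫_ℝ e dν(e). Set ζ := (k+φ)/(α − b/2), w₂(t) := −((T−t)/(k+φ) + 1/(α − b/2))^{−1} − b/2, l₁(t) := 2φρ·((T−t) + ζ)^{−1}·(1 − e^{−κ(T−t)})/κ, l₀(t) := 2φρλm·((T−t) + ζ)^{−1}·(e^{−κ(T−t)} − 1 + κ(T−t))/κ², and w₁(t, μ) := l₀(t) + l₁(t)·μ. Then for all t ∈ [0, T] and all μ ∈ ℝ: ∂_t w₁(t, μ) − κμ·∂_μ w₁(t, μ) + λ·∫_ℝ (w₁(t, μ + e) − w₁(t, μ)) dν(e) + ((w₁(t, μ) − 2φρμ)/(k+φ))·(w₂(t) + b/2) = 0, and w₁(T, μ) = 0. -/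
open MeasureTheory

/-- The function `w₁(t, μ) = l₀(t) + l₁(t) μ` solves the coupled equation (w₁)
from the exploratory HJB equation:
`∂ₜw₁ - κμ ∂_μ w₁ + λ ∫ (w₁(t, μ+e) - w₁(t, μ)) dν(e)
  + ((w₁ - 2φρμ)/(k+φ))(w₂ + b/2) = 0`, with `w₁(T, ·) = 0`. -/
theorem stmt_8 (T b k φ ρ α κ lam : ℝ) (hT : 0 < T) (hkφ : 0 < k + φ)
    (hα : 0 < α - b / 2) (hκ : 0 < κ)
    (ν : Measure ℝ) [IsProbabilityMeasure ν] (hν : Integrable id ν)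
    (m : ℝ) (hm : m = ∫ e, e ∂ν)
    (ζ : ℝ) (hζ : ζ = (k + φ) / (α - b / 2))
    (w₂ l₁ l₀ : ℝ → ℝ) (w₁ : ℝ → ℝ → ℝ)
    (hw₂ : w₂ = fun t => -((T - t) / (k + φ) + 1 / (α - b / 2))⁻¹ - b / 2)
    (hl₁ : l₁ = fun t => 2 * φ * ρ * ((T - t) + ζ)⁻¹ *
        ((1 - Real.exp (-κ * (T - t))) / κ))
    (hl₀ : l₀ = fun t => 2 * φ * ρ * lam * m * ((T - t) + ζ)⁻¹ *
        ((Real.exp (-κ * (T - t)) - 1 + κ * (T - t)) / κ ^ 2))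
    (hw₁ : w₁ = fun t μ => l₀ t + l₁ t * μ) :
    (∀ t ∈ Set.Icc (0 : ℝ) T, ∀ μ : ℝ,
        deriv (fun s => w₁ s μ) t - κ * μ * deriv (fun x => w₁ t x) μ +
          lam * (∫ e, (w₁ t (μ + e) - w₁ t μ) ∂ν) +
          ((w₁ t μ - 2 * φ * ρ * μ) / (k + φ)) * (w₂ t + b / 2) = 0) ∧
    (∀ μ : ℝ, w₁ T μ = 0) := by
  have hκne : κ ≠ 0 := ne_of_gt hκ
  have hαne : α - b / 2 ≠ 0 := ne_of_gt hα
  have hkφne : k + φ ≠ 0 := ne_of_gt hkφ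
  have hζpos : 0 < ζ := hζ ▸ div_pos hkφ hα
  subst hw₁ hl₀ hl₁ hw₂ hm
  set M : ℝ := ∫ e, e ∂ν with hM
  clear_value M
  constructor
  · intro t ht μ
    have hD : (T - t) + ζ ≠ 0 := by
      have : 0 ≤ T - t := by linarith [ht.2]
      positivity
    have hc : HasDerivAt (fun s : ℝ => (T - s) + ζ) (-1) t := by
      simpa using ((hasDerivAt_id t).const_sub T).add_const ζ
    have hP : HasDerivAt (fun s : ℝ => ((T - s) + ζ)⁻¹)
        (-(-1) / ((T - t) + ζ) ^ 2) t := hc.inv hD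
    have hin : HasDerivAt (fun s : ℝ => -κ * (T - s)) (-κ * -1) t :=
      ((hasDerivAt_id t).const_sub T).const_mul (-κ)
    have hexp : HasDerivAt (fun s : ℝ => Real.exp (-κ * (T - s)))
        (Real.exp (-κ * (T - t)) * (-κ * -1)) t := hin.exp
    have hQ : HasDerivAt (fun s : ℝ => (1 - Real.exp (-κ * (T - s))) / κ)
        ((0 - Real.exp (-κ * (T - t)) * (-κ * -1)) / κ) t :=
      ((hasDerivAt_const t (1 : ℝ)).sub hexp).div_const κ
    have hlin : HasDerivAt (fun s : ℝ => κ * (T - s)) (κ * -1) t :=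
      ((hasDerivAt_id t).const_sub T).const_mul κ
    have hR : HasDerivAt
        (fun s : ℝ => (Real.exp (-κ * (T - s)) - 1 + κ * (T - s)) / κ ^ 2)
        ((Real.exp (-κ * (T - t)) * (-κ * -1) + κ * -1) / κ ^ 2) t :=
      ((hexp.sub_const 1).add hlin).div_const (κ ^ 2)
    have hL1 : HasDerivAt
        (fun s : ℝ => 2 * φ * ρ * ((T - s) + ζ)⁻¹ * ((1 - Real.exp (-κ * (T - s))) / κ))
        (2 * φ * ρ * (-(-1) / ((T - t) + ζ) ^ 2) * ((1 - Real.exp (-κ * (T - t))) / κ)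
          + 2 * φ * ρ * ((T - t) + ζ)⁻¹ *
            ((0 - Real.exp (-κ * (T - t)) * (-κ * -1)) / κ)) t :=
      (hP.const_mul (2 * φ * ρ)).mul hQ
    have hL0 : HasDerivAt
        (fun s : ℝ => 2 * φ * ρ * lam * M * ((T - s) + ζ)⁻¹ *
          ((Real.exp (-κ * (T - s)) - 1 + κ * (T - s)) / κ ^ 2))
        (2 * φ * ρ * lam * M * (-(-1) / ((T - t) + ζ) ^ 2) *
            ((Real.exp (-κ * (T - t)) - 1 + κ * (T - t)) / κ ^ 2)
          + 2 * φ * ρ * lam * M * ((T - t) + ζ)⁻¹ *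
            ((Real.exp (-κ * (T - t)) * (-κ * -1) + κ * -1) / κ ^ 2)) t :=
      (hP.const_mul (2 * φ * ρ * lam * M)).mul hR
    have hTd := (hL0.add (hL1.mul_const μ)).deriv
    have hSd : deriv (fun x : ℝ =>
        2 * φ * ρ * lam * M * ((T - t) + ζ)⁻¹ *
          ((Real.exp (-κ * (T - t)) - 1 + κ * (T - t)) / κ ^ 2)
        + 2 * φ * ρ * ((T - t) + ζ)⁻¹ * ((1 - Real.exp (-κ * (T - t))) / κ) * x) μ
        = 2 * φ * ρ * ((T - t) + ζ)⁻¹ * ((1 - Real.exp (-κ * (T - t))) / κ) := by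
      have := ((hasDerivAt_const μ
          (2 * φ * ρ * lam * M * ((T - t) + ζ)⁻¹ *
            ((Real.exp (-κ * (T - t)) - 1 + κ * (T - t)) / κ ^ 2))).add
        ((hasDerivAt_id μ).const_mul
          (2 * φ * ρ * ((T - t) + ζ)⁻¹ * ((1 - Real.exp (-κ * (T - t))) / κ)))).deriv
      simpa using this
    have hint : (∫ e, ((2 * φ * ρ * lam * M * ((T - t) + ζ)⁻¹ *
          ((Real.exp (-κ * (T - t)) - 1 + κ * (T - t)) / κ ^ 2)
        + 2 * φ * ρ * ((T - t) + ζ)⁻¹ * ((1 - Real.exp (-κ * (T - t))) / κ) * (μ + e))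
        - (2 * φ * ρ * lam * M * ((T - t) + ζ)⁻¹ *
          ((Real.exp (-κ * (T - t)) - 1 + κ * (T - t)) / κ ^ 2)
        + 2 * φ * ρ * ((T - t) + ζ)⁻¹ * ((1 - Real.exp (-κ * (T - t))) / κ) * μ)) ∂ν)
        = 2 * φ * ρ * ((T - t) + ζ)⁻¹ * ((1 - Real.exp (-κ * (T - t))) / κ) * M := by
      have h1 : (∫ e, ((2 * φ * ρ * lam * M * ((T - t) + ζ)⁻¹ *
            ((Real.exp (-κ * (T - t)) - 1 + κ * (T - t)) / κ ^ 2)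
          + 2 * φ * ρ * ((T - t) + ζ)⁻¹ * ((1 - Real.exp (-κ * (T - t))) / κ) * (μ + e))
          - (2 * φ * ρ * lam * M * ((T - t) + ζ)⁻¹ *
            ((Real.exp (-κ * (T - t)) - 1 + κ * (T - t)) / κ ^ 2)
          + 2 * φ * ρ * ((T - t) + ζ)⁻¹ * ((1 - Real.exp (-κ * (T - t))) / κ) * μ)) ∂ν)
          = ∫ e, 2 * φ * ρ * ((T - t) + ζ)⁻¹ *
            ((1 - Real.exp (-κ * (T - t))) / κ) * e ∂ν :=
        integral_congr_ae (Filter.Eventually.of_forall fun e : ℝ => by ring)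
      rw [h1, integral_const_mul, hM]
    have hw2 : -((T - t) / (k + φ) + 1 / (α - b / 2))⁻¹ - b / 2 + b / 2
        = -(k + φ) / ((T - t) + ζ) := by
      have hNpos : 0 < (T - t) * (α - b / 2) + (k + φ) := by
        have h1 : 0 ≤ (T - t) * (α - b / 2) :=
          mul_nonneg (by linarith [ht.2]) hα.le
        linarith
      have hN : (T - t) * (α - b / 2) + (k + φ) ≠ 0 := ne_of_gt hNpos
      have hX : (T - t) / (k + φ) + 1 / (α - b / 2) = ((T - t) + ζ) / (k + φ) := by
        rw [hζ]
        field_simp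
      rw [hX, inv_div]
      ring
    simp only
    erw [hTd, hSd, hint, hw2]
    clear hTd hSd hint hw2 hL0 hL1 hR hlin hQ hexp hin hP hc hν
    field_simp
    ring
  · intro μ
    simp [sub_self, Real.exp_zero]
end

section
/- Let A ⊆ ℝ be measurable, T > 0, and let b : [0, T] × ℝ⁴ × A → ℝ⁴ be measurable. Assume: (i) there is C₁ > 0 with |b(t, y, v) − b(t, y′, v)| ≤ C₁|y − y′| for all t ∈ [0, T], v ∈ A, y, y′ ∈ ℝ⁴; (ii) there is C₂ > 0 with |b(t, 0, v)| ≤ C₂ for all t, v. Let π(·|t, y) be, for each (t, y) ∈ [0, T] × ℝ⁴, a measurable probability density on A (nonnegative with ∫_A π(v|t, y) dv = 1) such that v ↦ b(t, y, v)π(v|t, y) is integrable for each (t, y), and assume there is C₃ > 0 with ∫_A |π(v|t, y) − π(v|t, y′)| dv ≤ C₃|y − y′| for all t, y, y′. Define b̃(t, y) := ∫_A b(t, y, v)·π(v|t, y) dv. Then for all t ∈ [0, T] and y, y′ ∈ ℝ⁴: |b̃(t, y) − b̃(t, y′)| ≤ C₁|y − y′| + (C₁|y| + C₂)·C₃·|y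 − y′|. In particular, b̃ is locally Lipschitz in y. -/
open MeasureTheory

/-- Local Lipschitz estimate for the aggregated exploratory drift
`b̃(t, y) = ∫_A b(t, y, v) π(v|t, y) dv`. -/
theorem stmt_11 (A : Set ℝ) (hA : MeasurableSet A) (T : ℝ) (hT : 0 < T)
    (b : ℝ → EuclideanSpace ℝ (Fin 4) → ℝ → EuclideanSpace ℝ (Fin 4))
    (hbmeas : Measurable fun p : ℝ × EuclideanSpace ℝ (Fin 4) × ℝ => b p.1 p.2.1 p.2.2)
    (C₁ : ℝ) (hC₁ : 0 < C₁)
    (hbLip : ∀ t ∈ Set.Icc (0 : ℝ) T, ∀ v ∈ A, ∀ y y' : EuclideanSpace ℝ (Fin 4),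
        ‖b t y v - b t y' v‖ ≤ C₁ * ‖y - y'‖)
    (C₂ : ℝ) (hC₂ : 0 < C₂)
    (hb0 : ∀ t ∈ Set.Icc (0 : ℝ) T, ∀ v ∈ A, ‖b t 0 v‖ ≤ C₂)
    (π : ℝ → EuclideanSpace ℝ (Fin 4) → ℝ → ℝ)
    (hπmeas : ∀ t y, Measurable (π t y))
    (hπnonneg : ∀ t y v, 0 ≤ π t y v)
    (hπone : ∀ t y, (∫ v in A, π t y v) = 1)
    (hπint : ∀ t y, IntegrableOn (fun v => π t y v • b t y v) A)
    (C₃ : ℝ) (hC₃ : 0 < C₃)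
    (hπLip : ∀ t ∈ Set.Icc (0 : ℝ) T, ∀ y y' : EuclideanSpace ℝ (Fin 4),
        (∫ v in A, |π t y v - π t y' v|) ≤ C₃ * ‖y - y'‖)
    (btilde : ℝ → EuclideanSpace ℝ (Fin 4) → EuclideanSpace ℝ (Fin 4))
    (hbtilde : btilde = fun t y => ∫ v in A, π t y v • b t y v) :
    (∀ t ∈ Set.Icc (0 : ℝ) T, ∀ y y' : EuclideanSpace ℝ (Fin 4),
        ‖btilde t y - btilde t y'‖ ≤
          C₁ * ‖y - y'‖ + (C₁ * ‖y‖ + C₂) * C₃ * ‖y - y'‖) ∧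
    (∀ t ∈ Set.Icc (0 : ℝ) T, LocallyLipschitz (btilde t)) := by
  -- measurability of v ↦ b t y v
  have hb_m : ∀ t y, Measurable (fun v : ℝ => b t y v) := by
    intro t y
    exact hbmeas.comp (measurable_const.prodMk (measurable_const.prodMk measurable_id))
  -- integrability of π t y on A
  have hπInt : ∀ t y, IntegrableOn (fun v => π t y v) A := by
    intro t y
    by_contra h
    have h0 := integral_undef h
    rw [hπone t y] at h0
    norm_num at h0
  -- pointwise bound on ‖b t y v‖
  have hbbd : ∀ t ∈ Set.Icc (0:ℝ) T, ∀ v ∈ A, ∀ y, ‖b t y v‖ ≤ C₁ * ‖y‖ + C₂ := by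
    intro t ht v hv y
    calc ‖b t y v‖ = ‖(b t y v - b t 0 v) + b t 0 v‖ := by rw [sub_add_cancel]
    _ ≤ ‖b t y v - b t 0 v‖ + ‖b t 0 v‖ := norm_add_le _ _
    _ ≤ C₁ * ‖y - 0‖ + C₂ := add_le_add (hbLip t ht v hv y 0) (hb0 t ht v hv)
    _ = C₁ * ‖y‖ + C₂ := by rw [sub_zero]
  -- main estimate
  have key : ∀ t ∈ Set.Icc (0 : ℝ) T, ∀ y y' : EuclideanSpace ℝ (Fin 4),
      ‖btilde t y - btilde t y'‖ ≤
        C₁ * ‖y - y'‖ + (C₁ * ‖y‖ + C₂) * C₃ * ‖y - y'‖ := by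
    intro t ht y y'
    set f1 : ℝ → EuclideanSpace ℝ (Fin 4) := fun v => π t y' v • (b t y v - b t y' v) with hf1
    set f2 : ℝ → EuclideanSpace ℝ (Fin 4) := fun v => (π t y v - π t y' v) • b t y v with hf2
    have hC12 : 0 ≤ C₁ * ‖y‖ + C₂ := by positivity
    have hf1int : IntegrableOn f1 A := by
      apply Integrable.mono' ((hπInt t y').norm.const_mul (C₁ * ‖y - y'‖))
      · exact (((hπmeas t y').aestronglyMeasurable).smul
          (((hb_m t y).sub (hb_m t y')).aestronglyMeasurable)).restrict
      · filter_upwards [ae_restrict_mem hA] with v hv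
        rw [norm_smul]
        have : ‖π t y' v‖ = π t y' v := abs_of_nonneg (hπnonneg t y' v)
        calc ‖π t y' v‖ * ‖b t y v - b t y' v‖ ≤ ‖π t y' v‖ * (C₁ * ‖y - y'‖) := by
              exact mul_le_mul_of_nonneg_left (hbLip t ht v hv y y') (norm_nonneg _)
        _ = C₁ * ‖y - y'‖ * ‖π t y' v‖ := by ring
    have hf2int : IntegrableOn f2 A := by
      apply Integrable.mono'
        ((((hπInt t y).sub (hπInt t y')).norm).const_mul (C₁ * ‖y‖ + C₂))
      · exact ((((hπmeas t y).sub (hπmeas t y')).aestronglyMeasurable).smul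
          ((hb_m t y).aestronglyMeasurable)).restrict
      · filter_upwards [ae_restrict_mem hA] with v hv
        rw [norm_smul]
        calc ‖π t y v - π t y' v‖ * ‖b t y v‖
            ≤ ‖π t y v - π t y' v‖ * (C₁ * ‖y‖ + C₂) :=
              mul_le_mul_of_nonneg_left (hbbd t ht v hv y) (norm_nonneg _)
        _ = (C₁ * ‖y‖ + C₂) * ‖π t y v - π t y' v‖ := by ring
    have hsum : ∀ v, π t y v • b t y v - π t y' v • b t y' v = f1 v + f2 v := by
      intro v
      simp only [hf1, hf2, sub_smul, smul_sub]
      abel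
    have hdiff : btilde t y - btilde t y' = (∫ v in A, f1 v) + (∫ v in A, f2 v) := by
      rw [hbtilde]
      simp only
      rw [← integral_add hf1int hf2int, ← integral_sub (hπint t y) (hπint t y')]
      exact integral_congr_ae (Filter.Eventually.of_forall fun v => hsum v)
    rw [hdiff]
    have h1 : ‖∫ v in A, f1 v‖ ≤ C₁ * ‖y - y'‖ := by
      calc ‖∫ v in A, f1 v‖ ≤ ∫ v in A, ‖f1 v‖ := norm_integral_le_integral_norm _
      _ ≤ ∫ v in A, π t y' v * (C₁ * ‖y - y'‖) := by
          apply integral_mono_ae hf1int.norm ((hπInt t y').mul_const _)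
          filter_upwards [ae_restrict_mem hA] with v hv
          rw [hf1, norm_smul, Real.norm_eq_abs, abs_of_nonneg (hπnonneg t y' v)]
          exact mul_le_mul_of_nonneg_left (hbLip t ht v hv y y') (hπnonneg t y' v)
      _ = (∫ v in A, π t y' v) * (C₁ * ‖y - y'‖) := integral_mul_const _ _
      _ = C₁ * ‖y - y'‖ := by rw [hπone t y', one_mul]
    have h2 : ‖∫ v in A, f2 v‖ ≤ (C₁ * ‖y‖ + C₂) * C₃ * ‖y - y'‖ := by
      calc ‖∫ v in A, f2 v‖ ≤ ∫ v in A, ‖f2 v‖ := norm_integral_le_integral_norm _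
      _ ≤ ∫ v in A, |π t y v - π t y' v| * (C₁ * ‖y‖ + C₂) := by
          apply integral_mono_ae hf2int.norm
            ((((hπInt t y).sub (hπInt t y')).abs).mul_const _)
          filter_upwards [ae_restrict_mem hA] with v hv
          rw [hf2, norm_smul]
          exact mul_le_mul_of_nonneg_left (hbbd t ht v hv y) (abs_nonneg _)
      _ = (∫ v in A, |π t y v - π t y' v|) * (C₁ * ‖y‖ + C₂) := integral_mul_const _ _
      _ ≤ (C₃ * ‖y - y'‖) * (C₁ * ‖y‖ + C₂) :=
          mul_le_mul_of_nonneg_right (hπLip t ht y y') hC12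
      _ = (C₁ * ‖y‖ + C₂) * C₃ * ‖y - y'‖ := by ring
    calc ‖(∫ v in A, f1 v) + ∫ v in A, f2 v‖ ≤ ‖∫ v in A, f1 v‖ + ‖∫ v in A, f2 v‖ :=
          norm_add_le _ _
    _ ≤ C₁ * ‖y - y'‖ + (C₁ * ‖y‖ + C₂) * C₃ * ‖y - y'‖ := add_le_add h1 h2
  refine ⟨key, ?_⟩
  intro t ht
  intro x
  set K : ℝ := C₁ + (C₁ * (‖x‖ + 1) + C₂) * C₃ with hK
  have hK0 : 0 ≤ K := by positivity
  refine ⟨K.toNNReal, Metric.ball x 1, Metric.ball_mem_nhds x one_pos, ?_⟩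
  rw [lipschitzOnWith_iff_dist_le_mul]
  intro y hy y' hy'
  rw [dist_eq_norm, dist_eq_norm]
  have hyx : ‖y‖ ≤ ‖x‖ + 1 := by
    have := mem_ball_iff_norm.mp hy
    calc ‖y‖ = ‖(y - x) + x‖ := by rw [sub_add_cancel]
    _ ≤ ‖y - x‖ + ‖x‖ := norm_add_le _ _
    _ ≤ ‖x‖ + 1 := by linarith [le_of_lt this]
  have hcoe : (K.toNNReal : ℝ) = K := Real.coe_toNNReal _ hK0
  rw [hcoe]
  calc ‖btilde t y - btilde t y'‖ ≤ C₁ * ‖y - y'‖ + (C₁ * ‖y‖ + C₂) * C₃ * ‖y - y'‖ :=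
        key t ht y y'
  _ ≤ C₁ * ‖y - y'‖ + (C₁ * (‖x‖ + 1) + C₂) * C₃ * ‖y - y'‖ := by
      gcongr
  _ = K * ‖y - y'‖ := by rw [hK]; ring
end
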